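/- In the setting of the two reduction orders of R·S·T, prove that S_p + C_p - G_p - A_p ≥ 0 for all 1 ≤ p ≤ n. -/
import Mathlib


open Finset

/-- Partial sum `Φ_p = φ_1 + ⋯ + φ_p` of a multiplicity vector. -/
def PS (f : ℕ → ℕ) (p : ℕ) : ℕ := ∑ i ∈ Finset.Icc 1 p, f i

/-- Partial sums `X_p` of the bumped row in the vector insertion `W·Z = X·Y`:
`X_0 = X_1 = 0`, `X_{p+1} = min(Z_p, X_p + w_{p+1})`. -/
def capX (W Z : ℕ → ℕ) : ℕ → ℕ
  | 0 => 0
  | p + 1 => if p = 0 then 0 else min (PS Z p) (capX W Z p + W (p + 1))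

/-- Component `x_p = X_p - X_{p-1} = min(Z_{p-1} - X_{p-1}, w_p)` (with `x_1 = 0`). -/
def xcomp (W Z : ℕ → ℕ) (p : ℕ) : ℕ := capX W Z p - capX W Z (p - 1)

/-- Component `y_q = w_q + z_q - x_q`. -/
def ycomp (W Z : ℕ → ℕ) (q : ℕ) : ℕ := W q + Z q - xcomp W Z q

/-- `A` from `S·T = A·B`. -/
def rowA (S T : ℕ → ℕ) : ℕ → ℕ := xcomp S T
/-- `B` from `S·T = A·B`. -/
def rowB (S T : ℕ → ℕ) : ℕ → ℕ := ycomp S T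
/-- `C` from `R·A = C·D`. -/
def rowC (R S T : ℕ → ℕ) : ℕ → ℕ := xcomp R (rowA S T)
/-- `D` from `R·A = C·D`. -/
def rowD (R S T : ℕ → ℕ) : ℕ → ℕ := ycomp R (rowA S T)
/-- `E` from `D·B = E·F`. -/
def rowE (R S T : ℕ → ℕ) : ℕ → ℕ := xcomp (rowD R S T) (rowB S T)
/-- `F` from `D·B = E·F`. -/
def rowF (R S T : ℕ → ℕ) : ℕ → ℕ := ycomp (rowD R S T) (rowB S T)
/-- `G` from `R·S = G·H`. -/
def rowG (R S : ℕ → ℕ) : ℕ → ℕ := xcomp R S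
/-- `H` from `R·S = G·H`. -/
def rowH (R S : ℕ → ℕ) : ℕ → ℕ := ycomp R S
/-- `I` from `H·T = I·J`. -/
def rowI (R S T : ℕ → ℕ) : ℕ → ℕ := xcomp (rowH R S) T
/-- `J` from `H·T = I·J`. -/
def rowJ (R S T : ℕ → ℕ) : ℕ → ℕ := ycomp (rowH R S) T
/-- `K` from `G·I = K·L`. -/
def rowK (R S T : ℕ → ℕ) : ℕ → ℕ := xcomp (rowG R S) (rowI R S T)
/-- `L` from `G·I = K·L`. -/
def rowL (R S T : ℕ → ℕ) : ℕ → ℕ := ycomp (rowG R S) (rowI R S T)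


lemma PS_zero (f : ℕ → ℕ) : PS f 0 = 0 := by simp [PS]

lemma PS_succ (f : ℕ → ℕ) (p : ℕ) : PS f (p+1) = PS f p + f (p+1) := by
  simpa [PS] using Finset.sum_Icc_succ_top (Nat.succ_le_succ (Nat.zero_le p)) f

lemma PS_mono (f : ℕ → ℕ) (p : ℕ) : PS f p ≤ PS f (p+1) := by
  rw [PS_succ]; omega

lemma capX_le_PS (W Z : ℕ → ℕ) (p : ℕ) : capX W Z (p+1) ≤ PS Z p := by
  cases p with
  | zero => simp [capX, PS_zero]
  | succ q =>
    simp only [capX, if_neg (Nat.succ_ne_zero q)]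
    exact min_le_left _ _

lemma capX_mono (W Z : ℕ → ℕ) (p : ℕ) : capX W Z p ≤ capX W Z (p+1) := by
  cases p with
  | zero => simp [capX]
  | succ q =>
    have h1 := capX_le_PS W Z q
    have h2 := PS_mono Z q
    calc capX W Z (q+1) ≤ min (PS Z (q+1)) (capX W Z (q+1) + W (q+1+1)) :=
          le_min (h1.trans h2) (Nat.le_add_right _ _)
      _ = capX W Z (q+1+1) := by simp [capX]

lemma PS_xcomp (W Z : ℕ → ℕ) (p : ℕ) : PS (xcomp W Z) p = capX W Z p := by
  induction p with
  | zero => simp [PS_zero, capX]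
  | succ q ih =>
    have := capX_mono W Z q
    rw [PS_succ, ih]
    simp only [xcomp, Nat.add_sub_cancel]
    omega

lemma key (R S T : ℕ → ℕ) (p : ℕ) :
    capX R S p + capX S T p ≤ PS S p + capX R (rowA S T) p := by
  induction p with
  | zero => simp [capX]
  | succ q ih =>
    cases q with
    | zero => simp [capX]
    | succ m =>
      have hA : PS (rowA S T) (m+1) = capX S T (m+1) := PS_xcomp S T (m+1)
      have hC1 := capX_le_PS R (rowA S T) m
      have hG1 := capX_le_PS R S m
      have hAm : PS (rowA S T) m = capX S T m := PS_xcomp S T m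
      simp only [capX, if_neg (Nat.succ_ne_zero m)] at *
      rw [PS_succ S (m+1)]
      omega

/-- `S_p + C_p - G_p - A_p ≥ 0` for all `1 ≤ p ≤ n`. -/
theorem S_add_C_ge_G_add_A (n : ℕ) (R S T : ℕ → ℕ) :
    ∀ p, 1 ≤ p → p ≤ n →
      PS (rowG R S) p + PS (rowA S T) p ≤ PS S p + PS (rowC R S T) p := by
  intro p _ _
  have h := key R S T p
  simpa [rowG, rowC, rowA, PS_xcomp] using h
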